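/- Let B be an atomless complete Boolean algebra and G a locally moving subgroup of Aut(B). Then for every nonzero a ∈ B and every n ≥ 1 there exists h ∈ G with var(h) ≤ a and hⁿ ≠ id. -/

import Mathlib

def fixb {B : Type*} [CompleteBooleanAlgebra B] (g : B ≃o B) : B :=
  sSup {a : B | ∀ b ≤ a, g b = b}

def varb {B : Type*} [CompleteBooleanAlgebra B] (g : B ≃o B) : B :=
  (fixb g)ᶜ

/-- `G` is a locally moving subgroup of `Aut(B)` if every nonzero `a` bounds the
`var` of some nonidentity element of `G`. -/
def LocallyMoving {B : Type*} [CompleteBooleanAlgebra B] (G : Subgroup (B ≃o B)) : Prop :=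
  ∀ a : B, a ≠ ⊥ → ∃ g ∈ G, g ≠ 1 ∧ varb g ≤ a

section Helpers

variable {B : Type*} [CompleteBooleanAlgebra B]

/-- Everything below `fixb g` is fixed by `g`. -/
lemma fixb_fix (g : B ≃o B) {b : B} (hb : b ≤ fixb g) : g b = b := by
  have h1 : b = ⨆ s ∈ {a : B | ∀ b ≤ a, g b = b}, b ⊓ s := by
    conv_lhs => rw [← inf_eq_left.mpr hb]
    rw [fixb, inf_sSup_eq]
  have h2 : g b = ⨆ s ∈ {a : B | ∀ b ≤ a, g b = b}, g (b ⊓ s) := by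
    conv_lhs => rw [h1]
    rw [iSup_subtype', iSup_subtype', g.map_iSup]
  rw [h2]
  calc (⨆ s ∈ {a : B | ∀ b ≤ a, g b = b}, g (b ⊓ s))
      = ⨆ s ∈ {a : B | ∀ b ≤ a, g b = b}, b ⊓ s := by
        apply iSup_congr; intro s; apply iSup_congr; intro hs
        exact hs _ inf_le_right
    _ = b := h1.symm

lemma le_fixb {g : B ≃o B} {a : B} (h : ∀ b ≤ a, g b = b) : a ≤ fixb g :=
  le_sSup h

lemma fix_of_disjoint_varb (g : B ≃o B) {y : B} (h : y ⊓ varb g = ⊥) : g y = y := by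
  have : y ≤ (varb g)ᶜ := le_compl_iff_disjoint_right.mpr (disjoint_iff.mpr h)
  rw [varb, compl_compl] at this
  exact fixb_fix g this

lemma decomp (x y : B) : (x ⊓ y) ⊔ (x ⊓ yᶜ) = x := by
  rw [← inf_sup_left, sup_compl_eq_top, inf_top_eq]

lemma oi_map_compl (g : B ≃o B) (x : B) : g xᶜ = (g x)ᶜ := by
  have h : IsCompl (g x) (g xᶜ) := by
    apply IsCompl.of_eq
    · rw [← g.map_inf, inf_compl_eq_bot, g.map_bot]
    · rw [← g.map_sup, sup_compl_eq_top, g.map_top]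
  exact h.compl_eq.symm

lemma map_varb (g : B ≃o B) : g (varb g) = varb g := by
  rw [varb, oi_map_compl, fixb_fix g le_rfl]

lemma map_le_sup_varb (g : B ≃o B) (x : B) : g x ≤ x ⊔ varb g := by
  have hx : (x ⊓ fixb g) ⊔ (x ⊓ varb g) = x := decomp x (fixb g)
  have h0 : g x = g (x ⊓ fixb g) ⊔ g (x ⊓ varb g) := by
    rw [← g.map_sup, hx]
  rw [h0, fixb_fix g inf_le_right]
  apply sup_le
  · exact le_sup_of_le_left inf_le_left
  · refine le_sup_of_le_right ?_
    calc g (x ⊓ varb g) ≤ g (varb g) := g.monotone inf_le_right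
      _ = varb g := map_varb g

lemma map_le_of_le {g : B ≃o B} {c x : B} (hg : varb g ≤ c) (hx : x ≤ c) : g x ≤ c :=
  (map_le_sup_varb g x).trans (sup_le hx hg)

/-- If `g` fixes everything below `varb g` then `g = 1`. -/
lemma eq_one_of_fix_varb {g : B ≃o B} (h : ∀ b ≤ varb g, g b = b) : g = 1 := by
  ext x
  have hx : (x ⊓ fixb g) ⊔ (x ⊓ varb g) = x := decomp x (fixb g)
  have h1 : g (x ⊓ fixb g) = x ⊓ fixb g := fixb_fix g inf_le_right
  have h2 : g (x ⊓ varb g) = x ⊓ varb g := h _ inf_le_right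
  show g x = x
  conv_lhs => rw [← hx]
  rw [g.map_sup, h1, h2, hx]

/-- A nontrivial automorphism moves something below its support. -/
lemma exists_moved {g : B ≃o B} (hg : g ≠ 1) : ∃ b ≤ varb g, g b ≠ b := by
  by_contra h
  push_neg at h
  exact hg (eq_one_of_fix_varb h)

lemma fixb_pow (g : B ≃o B) (k : ℕ) : ∀ b ≤ fixb g, (g ^ k) b = b := by
  induction k with
  | zero => intro b _; rfl
  | succ k IH =>
    intro b hb
    have : (g ^ (k + 1)) b = (g ^ k) (g b) := by rw [pow_succ]; rfl
    rw [this, fixb_fix g hb]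
    exact IH b hb

lemma varb_pow_le (g : B ≃o B) (k : ℕ) : varb (g ^ k) ≤ varb g := by
  apply compl_le_compl
  exact le_fixb (fixb_pow g k)

lemma varb_mul_le (g f : B ≃o B) : varb (g * f) ≤ varb g ⊔ varb f := by
  have h : fixb g ⊓ fixb f ≤ fixb (g * f) := by
    apply le_fixb
    intro b hb
    show g (f b) = b
    rw [fixb_fix f (hb.trans inf_le_right), fixb_fix g (hb.trans inf_le_left)]
  calc varb (g * f) = (fixb (g * f))ᶜ := rfl
    _ ≤ (fixb g ⊓ fixb f)ᶜ := compl_le_compl h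
    _ = varb g ⊔ varb f := by rw [compl_inf]; rfl

lemma varb_ne_bot {g : B ≃o B} (hg : g ≠ 1) : varb g ≠ ⊥ := by
  intro h
  apply hg
  apply eq_one_of_fix_varb
  intro b hb
  rw [h, le_bot_iff] at hb
  rw [hb, g.map_bot]

/-- Either `f` fixes everything below `c`, or some nonzero `b ≤ c` is moved
completely off itself. -/
lemma sublemmaS (f : B ≃o B) (c : B) :
    (∀ b ≤ c, f b = b) ∨ ∃ b, b ≠ ⊥ ∧ b ≤ c ∧ b ⊓ f b = ⊥ := by
  by_cases h : ∀ b ≤ c, f b = b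
  · exact Or.inl h
  · right
    push_neg at h
    obtain ⟨b, hbc, hbne⟩ := h
    by_cases hle : b ≤ f b
    · have hne : ¬ f b ≤ b := fun h' => hbne (le_antisymm h' hle)
      have hb''ne : f b ⊓ bᶜ ≠ ⊥ := by
        intro h0; apply hne; rwa [← sdiff_eq_bot_iff, sdiff_eq]
      have hsb : f.symm (f b ⊓ bᶜ) ≤ b := by
        have h1 : f.symm (f b ⊓ bᶜ) ≤ f.symm (f b) := f.symm.monotone inf_le_left
        rwa [f.symm_apply_apply] at h1
      refine ⟨f.symm (f b ⊓ bᶜ), ?_, hsb.trans hbc, ?_⟩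
      · intro h0
        apply hb''ne
        have h1 := congrArg f h0
        rwa [f.apply_symm_apply, f.map_bot] at h1
      · have h2 : f (f.symm (f b ⊓ bᶜ)) ≤ bᶜ := by
          rw [f.apply_symm_apply]; exact inf_le_right
        have h3 := inf_le_inf hsb h2
        rwa [inf_compl_eq_bot, le_bot_iff] at h3
    · have hb'ne : b ⊓ (f b)ᶜ ≠ ⊥ := by
        intro h0; apply hle; rwa [← sdiff_eq_bot_iff, sdiff_eq]
      refine ⟨b ⊓ (f b)ᶜ, hb'ne, inf_le_left.trans hbc, ?_⟩
      have h2 : f (b ⊓ (f b)ᶜ) ≤ f b := f.monotone inf_le_left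
      have h3 := inf_le_inf (inf_le_right : b ⊓ (f b)ᶜ ≤ (f b)ᶜ) h2
      rwa [compl_inf_eq_bot, le_bot_iff] at h3

lemma fix_all_pow {g : B ≃o B} {c : B} (h : ∀ b ≤ c, g b = b) (s : ℕ) :
    ∀ b ≤ c, (g ^ s) b = b := by
  induction s with
  | zero => intro b _; rfl
  | succ s IH =>
    intro b hb
    have : (g ^ (s + 1)) b = (g ^ s) (g b) := by rw [pow_succ]; rfl
    rw [this, h b hb]
    exact IH b hb

end Helpers

/-- For a locally moving subgroup of an atomless complete Boolean algebra, for every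
nonzero `a` and every `n ≥ 1` there is `h ∈ G` with `var h ≤ a` and `hⁿ ≠ 1`. -/
theorem stmt10 {B : Type*} [CompleteBooleanAlgebra B] (hatomless : ∀ x : B, ¬ IsAtom x)
    (G : Subgroup (B ≃o B)) (hG : LocallyMoving G) :
    ∀ a : B, a ≠ ⊥ → ∀ n : ℕ, 1 ≤ n → ∃ h ∈ G, varb h ≤ a ∧ h ^ n ≠ 1 := by
  suffices H : ∀ n : ℕ, 1 ≤ n → ∀ a : B, a ≠ ⊥ → ∃ h ∈ G, varb h ≤ a ∧ h ^ n ≠ 1 by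
    intro a ha n hn; exact H n hn a ha
  intro n
  induction n using Nat.strong_induction_on with
  | _ n IH =>
  intro hn a ha
  obtain ⟨g, hgG, hg1, hgvar⟩ := hG a ha
  by_cases hgn : g ^ n = 1
  · -- g has finite order dividing n; reduce to a smaller exponent
    have hfin : IsOfFinOrder g := isOfFinOrder_iff_pow_eq_one.mpr ⟨n, hn, hgn⟩
    set m := orderOf g with hm
    have hm0 : 0 < m := hfin.orderOf_pos
    have hm1 : m ≠ 1 := by
      intro h
      exact hg1 (orderOf_eq_one_iff.mp h)
    set p := m.minFac with hpdef
    have hp : p.Prime := Nat.minFac_prime hm1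
    have hpm : p ∣ m := Nat.minFac_dvd m
    have hmn : m ∣ n := orderOf_dvd_of_pow_eq_one hgn
    have hpn : p ∣ n := hpm.trans hmn
    set g₁ : B ≃o B := g ^ (m / p) with hg₁def
    have hg₁G : g₁ ∈ G := G.pow_mem hgG _
    have hmp0 : m / p ≠ 0 := (Nat.div_pos (Nat.minFac_le hm0) hp.pos).ne'
    have hord : orderOf g₁ = p := by
      rw [hg₁def, orderOf_pow' g hmp0, ← hm]
      have hdvd : m / p ∣ m := Nat.div_dvd_of_dvd hpm
      rw [Nat.gcd_eq_right hdvd]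
      exact Nat.div_div_self hpm hm0.ne'
    have hg₁1 : g₁ ≠ 1 := by
      intro h
      rw [h, orderOf_one] at hord
      exact hp.one_lt.ne hord
    have hg₁p : g₁ ^ p = 1 := by rw [← hord]; exact pow_orderOf_eq_one g₁
    have hg₁var : varb g₁ ≤ a := (varb_pow_le g _).trans hgvar
    -- construct c with disjoint orbit c, g₁ c, ..., g₁^(p-1) c
    have horbit : ∀ k, k < p → ∃ c, c ≠ ⊥ ∧ c ≤ varb g₁ ∧
        ∀ i, 1 ≤ i → i ≤ k → c ⊓ (g₁ ^ i) c = ⊥ := by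
      intro k
      induction k with
      | zero =>
        intro _
        exact ⟨varb g₁, varb_ne_bot hg₁1, le_rfl, fun i h1 h2 => by omega⟩
      | succ k IHk =>
        intro hk1
        obtain ⟨c, hc0, hcvar, hcdisj⟩ := IHk (by omega)
        rcases sublemmaS (g₁ ^ (k + 1)) c with hfix | ⟨b, hb0, hbc, hbd⟩
        · -- impossible: g₁^(k+1) fixes all of c, then so does g₁
          exfalso
          have hcop : Nat.Coprime (k + 1) p := by
            apply Nat.Coprime.symm
            rw [Nat.Prime.coprime_iff_not_dvd hp]
            intro hdvd
            have := Nat.le_of_dvd (by omega) hdvd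
            omega
          obtain ⟨s, -, hs⟩ := Nat.exists_mul_mod_eq_one_of_coprime hcop hp.one_lt
          have hfix2 : ∀ b ≤ c, ((g₁ ^ (k + 1)) ^ s) b = b := fix_all_pow hfix s
          have hpow : (g₁ ^ (k + 1)) ^ s = g₁ := by
            rw [← pow_mul]
            have hmod : (k + 1) * s = p * ((k + 1) * s / p) + 1 := by
              conv_lhs => rw [← Nat.div_add_mod ((k + 1) * s) p]
              rw [hs]
            rw [hmod, pow_add, pow_mul, hg₁p, one_pow, one_mul, pow_one]
          rw [hpow] at hfix2
          have : c ≤ fixb g₁ := le_fixb hfix2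
          have hbot : c ≤ (⊥ : B) := by
            have := le_inf this hcvar
            rwa [varb, inf_compl_eq_bot] at this
          exact hc0 (le_bot_iff.mp hbot)
        · refine ⟨b, hb0, hbc.trans hcvar, ?_⟩
          intro i h1 h2
          rcases Nat.lt_or_ge i (k + 1) with hi | hi
          · have : b ⊓ (g₁ ^ i) b ≤ c ⊓ (g₁ ^ i) c :=
              inf_le_inf hbc ((g₁ ^ i).monotone hbc)
            rw [hcdisj i h1 (by omega)] at this
            exact le_bot_iff.mp this
          · have : i = k + 1 := by omega
            rw [this]
            exact hbd
    obtain ⟨c, hc0, hcvar, hcdisj⟩ := horbit (p - 1) (Nat.sub_lt hp.pos one_pos)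
    -- the inner element f with f^(n/p) ≠ 1, supported in c
    set q := n / p with hqdef
    have hq1 : 1 ≤ q := by
      rw [hqdef]
      exact (Nat.one_le_div_iff hp.pos).mpr (Nat.le_of_dvd hn hpn)
    have hqn : q < n := Nat.div_lt_self (by omega) hp.one_lt
    obtain ⟨f, hfG, hfvar, hfq⟩ := IH q hqn hq1 c hc0
    set h : B ≃o B := g₁ * f with hhdef
    have hhG : h ∈ G := G.mul_mem hg₁G hfG
    have hhvar : varb h ≤ a := by
      apply (varb_mul_le g₁ f).trans
      exact sup_le hg₁var (hfvar.trans (hcvar.trans hg₁var))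
    refine ⟨h, hhG, hhvar, ?_⟩
    -- key computation : for x ≤ c, h^p x = f x
    have hfc : ∀ x ≤ c, f x ≤ c := fun x hx => map_le_of_le hfvar hx
    have hkey1 : ∀ j, 1 ≤ j → j ≤ p → ∀ x ≤ c, (h ^ j) x = (g₁ ^ j) (f x) := by
      intro j
      induction j with
      | zero => omega
      | succ j IHj =>
        intro _ hjp x hx
        rcases Nat.eq_zero_or_pos j with hj0 | hj1
        · subst hj0
          show (h ^ 1) x = (g₁ ^ 1) (f x)
          rw [pow_one, pow_one]
          rfl
        · have hstep : (h ^ (j + 1)) x = h ((h ^ j) x) := by rw [pow_succ']; rfl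
          rw [hstep, IHj hj1 (by omega) x hx]
          show g₁ (f ((g₁ ^ j) (f x))) = (g₁ ^ (j + 1)) (f x)
          have hdj : (g₁ ^ j) (f x) ⊓ varb f = ⊥ := by
            have h1 : (g₁ ^ j) (f x) ≤ (g₁ ^ j) c := (g₁ ^ j).monotone (hfc x hx)
            have h2 : varb f ⊓ (g₁ ^ j) (f x) ≤ c ⊓ (g₁ ^ j) c :=
              inf_le_inf hfvar h1
            rw [hcdisj j hj1 (by omega)] at h2
            rw [inf_comm]
            exact le_bot_iff.mp h2
          rw [fix_of_disjoint_varb f hdj]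
          rw [pow_succ']
          rfl
    have hkeyp : ∀ x ≤ c, (h ^ p) x = f x := by
      intro x hx
      rw [hkey1 p hp.one_lt.le le_rfl x hx, hg₁p]
      rfl
    have hkey2 : ∀ k, ∀ x ≤ c, (h ^ (p * k)) x = (f ^ k) x := by
      intro k
      induction k with
      | zero => intro x _; rfl
      | succ k IHk =>
        intro x hx
        have h1 : (h ^ (p * (k + 1))) x = (h ^ (p * k)) ((h ^ p) x) := by
          rw [Nat.mul_succ, pow_add]; rfl
        rw [h1, hkeyp x hx, IHk (f x) (hfc x hx)]
        show (f ^ k) (f x) = (f ^ (k + 1)) x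
        rw [pow_succ]
        rfl
    -- conclude
    obtain ⟨b, hbvar, hbne⟩ := exists_moved hfq
    have hbc : b ≤ c := hbvar.trans ((varb_pow_le f q).trans hfvar)
    intro hcon
    apply hbne
    have hpq : p * q = n := Nat.mul_div_cancel' hpn
    have : (h ^ n) b = (f ^ q) b := by rw [← hpq]; exact hkey2 q b hbc
    rw [hcon] at this
    exact this.symm
  · exact ⟨g, hgG, hgvar, hgn⟩
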